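/- arXiv:1902.00196 — 3 statements merged into one kernel-verified Lean document; each statement's English description precedes it below -/
import Mathlib

section
/- Let F, G, H : CohI^n → CohI be normal functors, let (f_{X⃗}) be a uniform family of cliques of the pointwise functor F ⊸ G (so f_{X⃗} ⊑ F(X⃗) ⊸ G(X⃗) for every n-tuple X⃗ of coherence spaces), and let (g_{X⃗}) be a uniform family of cliques of G ⊸ H. Then the family of relational compositions (g_{X⃗} ∘ f_{X⃗}), where g ∘ f = {(x,z) | ∃y, (x,y) ∈ f and (y,z) ∈ g}, is a uniform family of cliques of F ⊸ H. -/
open CategoryTheory Limits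

/-- A coherence space: a web together with a reflexive symmetric coherence relation. -/
structure CohSpace : Type 1 where
  web : Type
  coh : web → web → Prop
  refl : ∀ x, coh x x
  symm : ∀ {x y}, coh x y → coh y x

/-- An embedding of coherence spaces: an injection preserving and reflecting coherence. -/
@[ext]
structure CohEmb (X Y : CohSpace) : Type where
  toFun : X.web → Y.web
  inj : Function.Injective toFun
  coh_iff : ∀ x x', X.coh x x' ↔ Y.coh (toFun x) (toFun x')

/-- The category `CohI` of coherence spaces and embeddings. -/
instance : Category CohSpace where
  Hom := CohEmb
  id X := ⟨id, fun _ _ h => h, fun _ _ => Iff.rfl⟩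
  comp f g := ⟨g.toFun ∘ f.toFun, g.inj.comp f.inj,
    fun x x' => (f.coh_iff x x').trans (g.coh_iff _ _)⟩
  id_comp _ := rfl
  comp_id _ := rfl
  assoc _ _ _ := rfl

/-- A clique: a set of pairwise coherent points. -/
def CohSpace.IsClique (X : CohSpace) (c : Set X.web) : Prop :=
  ∀ ⦃x⦄, x ∈ c → ∀ ⦃y⦄, y ∈ c → X.coh x y

/-- Linear negation (dual) of a coherence space. -/
def CohSpace.dual (X : CohSpace) : CohSpace where
  web := X.web
  coh x y := x = y ∨ ¬ X.coh x y
  refl _ := Or.inl rfl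
  symm h := h.elim (fun h' => Or.inl h'.symm) (fun h' => Or.inr fun hc => h' (X.symm hc))

/-- Tensor product of coherence spaces. -/
def CohSpace.tens (X Y : CohSpace) : CohSpace where
  web := X.web × Y.web
  coh p q := X.coh p.1 q.1 ∧ Y.coh p.2 q.2
  refl p := ⟨X.refl p.1, Y.refl p.2⟩
  symm h := ⟨X.symm h.1, Y.symm h.2⟩

/-- Direct sum (`⊕`) of coherence spaces. -/
def CohSpace.sum (X Y : CohSpace) : CohSpace where
  web := X.web ⊕ Y.web
  coh := Sum.LiftRel X.coh Y.coh
  refl x := by cases x with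
    | inl a => exact Sum.LiftRel.inl (X.refl a)
    | inr b => exact Sum.LiftRel.inr (Y.refl b)
  symm h := by cases h with
    | inl h => exact Sum.LiftRel.inl (X.symm h)
    | inr h => exact Sum.LiftRel.inr (Y.symm h)

/-- Linear implication `X ⊸ Y := (X ⊗ Y^⊥)^⊥`. -/
def CohSpace.lolly (X Y : CohSpace) : CohSpace := (X.tens Y.dual).dual

/-- The with connective `X & Y := (X^⊥ ⊕ Y^⊥)^⊥`. -/
def CohSpace.withc (X Y : CohSpace) : CohSpace := (X.dual.sum Y.dual).dual

/-- The one-point coherence space (interpretation of `1` and `⊥`). -/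
def oneCoh : CohSpace where
  web := PUnit
  coh _ _ := True
  refl _ := trivial
  symm _ := trivial

/-- The empty coherence space (interpretation of `0` and `⊤`). -/
def topCoh : CohSpace where
  web := Empty
  coh x _ := x.elim
  refl x := x.elim
  symm {x} _ := x.elim

/-- The induced embedding between duals. -/
def CohEmb.dualMap {X Y : CohSpace} (f : X ⟶ Y) : X.dual ⟶ Y.dual where
  toFun := f.toFun
  inj := f.inj
  coh_iff x x' := by
    constructor
    · rintro (rfl | h)
      · exact Or.inl rfl
      · exact Or.inr fun hc => h ((f.coh_iff _ _).2 hc)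
    · rintro (h | h)
      · exact Or.inl (f.inj h)
      · exact Or.inr fun hc => h ((f.coh_iff _ _).1 hc)

/-- The induced embedding between tensor products. -/
def CohEmb.tensMap {X X' Y Y' : CohSpace} (f : X ⟶ X') (g : Y ⟶ Y') :
    X.tens Y ⟶ X'.tens Y' where
  toFun := Prod.map f.toFun g.toFun
  inj := f.inj.prodMap g.inj
  coh_iff p q := and_congr (f.coh_iff _ _) (g.coh_iff _ _)

/-- The induced embedding between direct sums. -/
def CohEmb.sumMap {X X' Y Y' : CohSpace} (f : X ⟶ X') (g : Y ⟶ Y') :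
    X.sum Y ⟶ X'.sum Y' where
  toFun := Sum.map f.toFun g.toFun
  inj := f.inj.sumMap g.inj
  coh_iff x x' := by
    constructor
    · intro h
      cases h with
      | inl h => exact Sum.LiftRel.inl ((f.coh_iff _ _).1 h)
      | inr h => exact Sum.LiftRel.inr ((g.coh_iff _ _).1 h)
    · intro h
      cases x with
      | inl a => cases x' with
        | inl a' => exact Sum.LiftRel.inl ((f.coh_iff _ _).2 (by cases h; assumption))
        | inr b' => exact absurd h (by intro hh; cases hh)
      | inr b => cases x' with
        | inl a' => exact absurd h (by intro hh; cases hh)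
        | inr b' => exact Sum.LiftRel.inr ((g.coh_iff _ _).2 (by cases h; assumption))

/-- Linear negation as a covariant endofunctor of `CohI`. -/
def dualFunctor : CohSpace ⥤ CohSpace where
  obj := CohSpace.dual
  map := CohEmb.dualMap
  map_id _ := rfl
  map_comp _ _ := rfl

/-- Tensor as a functor on the product category. -/
def tensorFunctor : CohSpace × CohSpace ⥤ CohSpace where
  obj p := p.1.tens p.2
  map f := CohEmb.tensMap f.1 f.2
  map_id _ := rfl
  map_comp _ _ := rfl

/-- Sum as a functor on the product category. -/
def sumFunctor : CohSpace × CohSpace ⥤ CohSpace where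
  obj p := p.1.sum p.2
  map f := CohEmb.sumMap f.1 f.2
  map_id p := by
    apply CohEmb.ext
    funext x
    cases x <;> rfl
  map_comp f g := by
    apply CohEmb.ext
    funext x
    cases x <;> rfl

/-- The category `CohI^n`. -/
abbrev CohTuple (n : ℕ) := Fin n → CohSpace

/-- A normal functor: one preserving filtered colimits and finite pullbacks. -/
def IsNormalFunctor {C : Type*} {D : Type*} [Category C] [Category D] (F : C ⥤ D) : Prop :=
  PreservesFilteredColimits F ∧ PreservesLimitsOfShape WalkingCospan F

/-- The web functor `CohI ⥤ Set`. -/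
def webF : CohSpace ⥤ Type where
  obj X := X.web
  map f := TypeCat.ofHom f.toFun
  map_id _ := rfl
  map_comp _ _ := rfl

/-- The category of elements of the web presheaf `|F|` of `F : CohI^n ⥤ CohI`. -/
abbrev Elts {n : ℕ} (F : CohTuple n ⥤ CohSpace) := (F ⋙ webF).Elements

/-- `(X⃗, x)` is a normal form of `F`: its webs are finite and it is initial in its own
slice category of `El(|F|)`. -/
def IsNormalForm {n : ℕ} {F : CohTuple n ⥤ CohSpace} (e : Elts F) : Prop :=
  (∀ i, Finite (e.1 i).web) ∧
    ∀ (f : Elts F) (u : f ⟶ e), ∃! v : e ⟶ f, v ≫ u = 𝟙 e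

/-- The pointwise dual functor `F^⊥`. -/
def dualF {n : ℕ} (F : CohTuple n ⥤ CohSpace) : CohTuple n ⥤ CohSpace := F ⋙ dualFunctor

/-- The pointwise tensor functor `F ⊗ G`. -/
def tensF {n : ℕ} (F G : CohTuple n ⥤ CohSpace) : CohTuple n ⥤ CohSpace :=
  F.prod' G ⋙ tensorFunctor

/-- The pointwise sum functor `F ⊕ G`. -/
def sumF {n : ℕ} (F G : CohTuple n ⥤ CohSpace) : CohTuple n ⥤ CohSpace :=
  F.prod' G ⋙ sumFunctor

/-- The pointwise linear implication functor `F ⊸ G`. -/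
def lollyF {n : ℕ} (F G : CohTuple n ⥤ CohSpace) : CohTuple n ⥤ CohSpace :=
  dualF (tensF F (dualF G))

/-- The degree of a normal functor: the supremum of the cardinalities of the webs
occurring in its normal forms. -/
noncomputable def degree {n : ℕ} (F : CohTuple n ⥤ CohSpace) : ℕ∞ :=
  ⨆ (e : Elts F) (_ : IsNormalForm e) (i : Fin n), (Nat.card (e.1 i).web : ℕ∞)

/-- `F` sends coherence spaces with finite webs to coherence spaces with finite webs. -/
def PreservesFiniteWebs {n : ℕ} (F : CohTuple n ⥤ CohSpace) : Prop :=
  ∀ X : CohTuple n, (∀ i, Finite (X i).web) → Finite (F.obj X).web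

/-- A finite normal functor: one preserving finiteness of webs and of finite degree. -/
def IsFiniteFunctor {n : ℕ} (F : CohTuple n ⥤ CohSpace) : Prop :=
  PreservesFiniteWebs F ∧ degree F < ⊤

/-- `NF(F)`: the set of isomorphism classes of normal forms of `F`. -/
def NFSet {n : ℕ} (F : CohTuple n ⥤ CohSpace) :
    Set (Quotient (isIsomorphicSetoid (Elts F))) :=
  { q | ∃ e : Elts F, IsNormalForm e ∧ Quotient.mk _ e = q }

/-- A uniform family of cliques of `F : CohI^n ⥤ CohI`. -/
def IsUniformFamily {n : ℕ} (F : CohTuple n ⥤ CohSpace)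
    (c : ∀ X : CohTuple n, Set (F.obj X).web) : Prop :=
  (∀ X, (F.obj X).IsClique (c X)) ∧
    ∀ (X Y : CohTuple n) (ι : X ⟶ Y), c X = (F.map ι).toFun ⁻¹' c Y

/-- Coherence of two normal forms: all their instantiations along embeddings into a
common tuple are coherent. -/
def NFCoherent {n : ℕ} {F : CohTuple n ⥤ CohSpace} (e e' : Elts F) : Prop :=
  ∀ (Z : CohTuple n) (ι : e.1 ⟶ Z) (κ : e'.1 ⟶ Z),
    (F.obj Z).coh ((F.map ι).toFun e.2) ((F.map κ).toFun e'.2)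

/-- A coherence space structure on a canonical finite web `Fin k`. -/
structure FinCohData where
  k : ℕ
  r : Fin k → Fin k → Prop
  refl : ∀ i, r i i
  symm : ∀ {i j}, r i j → r j i

/-- The coherence space associated to a `FinCohData`. -/
def FinCohData.toCoh (d : FinCohData) : CohSpace where
  web := Fin d.k
  coh := d.r
  refl := d.refl
  symm := d.symm

/-- A canonical tuple of finite coherence spaces. -/
def canonTuple {n : ℕ} (d : Fin n → FinCohData) : CohTuple n := fun i => (d i).toCoh

/-- Self-coherent normal forms of `F` carried by canonical tuples of finite coherence
spaces; the web of the trace is the set of their isomorphism classes. -/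
def CanonNF {n : ℕ} (F : CohTuple n ⥤ CohSpace) : Type :=
  Σ d : Fin n → FinCohData,
    { x : (F.obj (canonTuple d)).web //
        IsNormalForm (F := F) ⟨canonTuple d, x⟩ ∧
          NFCoherent (F := F) ⟨canonTuple d, x⟩ ⟨canonTuple d, x⟩ }

/-- The element of `El(|F|)` carried by a canonical normal form. -/
def CanonNF.toElts {n : ℕ} {F : CohTuple n ⥤ CohSpace} (c : CanonNF F) : Elts F :=
  ⟨canonTuple c.1, c.2.1⟩

/-- Canonical normal forms are identified when isomorphic in `El(|F|)`. -/
def traceSetoid {n : ℕ} (F : CohTuple n ⥤ CohSpace) : Setoid (CanonNF F) :=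
  (isIsomorphicSetoid (Elts F)).comap CanonNF.toElts

/-- The trace `Tr(F)`: isomorphism classes of self-coherent normal forms, with the
coherence relation between normal forms. -/
def Tr {n : ℕ} (F : CohTuple n ⥤ CohSpace) : CohSpace where
  web := Quotient (traceSetoid F)
  coh q q' := ∃ c c' : CanonNF F,
    Quotient.mk (traceSetoid F) c = q ∧ Quotient.mk (traceSetoid F) c' = q' ∧
      NFCoherent c.toElts c'.toElts
  refl q := by
    obtain ⟨c, rfl⟩ := Quotient.exists_rep q
    exact ⟨c, c, rfl, rfl, c.2.2.2⟩
  symm h := by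
    obtain ⟨c, c', h1, h2, h3⟩ := h
    exact ⟨c', c, h2, h1, fun Z ι κ => (F.obj Z).symm (h3 Z κ ι)⟩

/-- The family of functors whose pointwise pairing computes `Z ↦ (X₁,…,Xₙ,Z)`. -/
def gfam {n : ℕ} (X : CohTuple n) (i : Fin (n + 1)) : CohTuple 1 ⥤ CohSpace :=
  if h : (i : ℕ) < n then (Functor.const (CohTuple 1)).obj (X ⟨i, h⟩)
  else Pi.eval (fun _ : Fin 1 => CohSpace) 0

/-- The partial application `F(X₁,…,Xₙ,−)` of `F : CohI^(n+1) ⥤ CohI`. -/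
def partialApp {n : ℕ} (F : CohTuple (n + 1) ⥤ CohSpace) (X : CohTuple n) :
    CohTuple 1 ⥤ CohSpace :=
  Functor.pi' (gfam X) ⋙ F

/-- The embedding `(X⃗, Z) ↪ (Y⃗, Z)` induced componentwise by `ι : X⃗ ↪ Y⃗`. -/
def extHom {n : ℕ} {X Y : CohTuple n} (ι : X ⟶ Y) (Z : CohTuple 1) (i : Fin (n + 1)) :
    (gfam X i).obj Z ⟶ (gfam Y i).obj Z := by
  by_cases h : (i : ℕ) < n
  · simp only [gfam, dif_pos h]
    exact ι ⟨i, h⟩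
  · simp only [gfam, dif_neg h]
    exact 𝟙 (Z 0)

/-- The embedding `extHom` as a morphism in `CohI^(n+1)`. -/
def extHomPi {n : ℕ} {X Y : CohTuple n} (ι : X ⟶ Y) (Z : CohTuple 1) :
    (Functor.pi' (gfam X)).obj Z ⟶ (Functor.pi' (gfam Y)).obj Z :=
  fun i => extHom ι Z i

/-- Transport along an object equality `G.obj X = Tr (partialApp F X)`. -/
def trWebCast {n : ℕ} {F : CohTuple (n + 1) ⥤ CohSpace} {G : CohTuple n ⥤ CohSpace}
    (h : ∀ X, G.obj X = Tr (partialApp F X)) (X : CohTuple n) :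
    (Tr (partialApp F X)).web → (G.obj X).web :=
  fun q => cast (congrArg CohSpace.web (h X)).symm q

/-- `G` acts on embeddings the way `∀(F)` does: normal forms are transported by
keeping the bound variables and substituting along `ι` on the free ones. -/
def ForallAction {n : ℕ} (F : CohTuple (n + 1) ⥤ CohSpace) (G : CohTuple n ⥤ CohSpace)
    (hobj : ∀ X, G.obj X = Tr (partialApp F X)) : Prop :=
  ∀ (X Y : CohTuple n) (ι : X ⟶ Y) (c : CanonNF (partialApp F X)),
    ∃ c' : CanonNF (partialApp F Y),
      (G.map ι).toFun (trWebCast hobj X (Quotient.mk (traceSetoid _) c))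
          = trWebCast hobj Y (Quotient.mk (traceSetoid _) c') ∧
        c'.1 = c.1 ∧
        HEq c'.2.1 ((F.map (extHomPi ι (canonTuple c.1))).toFun c.2.1)

/-- `G` is (a presentation of) the functor `∀(F)`. -/
def IsForallExtension {n : ℕ} (F : CohTuple (n + 1) ⥤ CohSpace)
    (G : CohTuple n ⥤ CohSpace) : Prop :=
  ∃ hobj : ∀ X, G.obj X = Tr (partialApp F X), ForallAction F G hobj

/-- The uniform family of cliques obtained by instantiating a clique of the trace. -/
def instFam {n : ℕ} (F : CohTuple n ⥤ CohSpace) (c : Set (Tr F).web) :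
    ∀ X : CohTuple n, Set (F.obj X).web := fun X =>
  { x | ∃ (d : CanonNF F) (ι : canonTuple d.1 ⟶ X),
      Quotient.mk (traceSetoid F) d ∈ c ∧ (F.map ι).toFun d.2.1 = x }

/-! ### Auxiliary constructions for statement 2: gluing two copies of `Y` along `X`. -/

/-- The coherence space obtained by gluing two copies of `Y` along the image of `ι`. -/
def glueSpace {X Y : CohSpace} (ι : CohEmb X Y) : CohSpace where
  web := Y.web ⊕ Y.web
  coh p q :=
    match p, q with
    | Sum.inl a, Sum.inl a' => Y.coh a a'
    | Sum.inr b, Sum.inr b' => Y.coh b b'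
    | Sum.inl a, Sum.inr b => a ∈ Set.range ι.toFun ∧ Y.coh a b
    | Sum.inr b, Sum.inl a => a ∈ Set.range ι.toFun ∧ Y.coh b a
  refl p := by cases p <;> exact Y.refl _
  symm {p q} h := by
    cases p <;> cases q
    · exact Y.symm h
    · exact ⟨h.1, Y.symm h.2⟩
    · exact ⟨h.1, Y.symm h.2⟩
    · exact Y.symm h

/-- The first copy embedding `Y ↪ glueSpace ι`. -/
def glueE1 {X Y : CohSpace} (ι : CohEmb X Y) : CohEmb Y (glueSpace ι) where
  toFun := Sum.inl
  inj := Sum.inl_injective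
  coh_iff _ _ := Iff.rfl

open Classical in
/-- The second copy embedding `Y ↪ glueSpace ι`, identifying the image of `ι` with the
first copy. -/
noncomputable def glueE2 {X Y : CohSpace} (ι : CohEmb X Y) : CohEmb Y (glueSpace ι) where
  toFun y := (if y ∈ Set.range ι.toFun then Sum.inl y else Sum.inr y : Y.web ⊕ Y.web)
  inj := by
    intro y y' h
    by_cases h1 : y ∈ Set.range ι.toFun <;> by_cases h2 : y' ∈ Set.range ι.toFun
    · simp only [if_pos h1, if_pos h2] at h; exact Sum.inl.inj h
    · simp only [if_pos h1, if_neg h2] at h; exact (Sum.inl_ne_inr h).elim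
    · simp only [if_neg h1, if_pos h2] at h; exact (Sum.inr_ne_inl h).elim
    · simp only [if_neg h1, if_neg h2] at h; exact Sum.inr.inj h
  coh_iff := by
    intro y y'
    by_cases h1 : y ∈ Set.range ι.toFun <;> by_cases h2 : y' ∈ Set.range ι.toFun
    · simp only [if_pos h1, if_pos h2]; exact Iff.rfl
    · simp only [if_pos h1, if_neg h2]; exact ⟨fun h => ⟨h1, h⟩, fun h => h.2⟩
    · simp only [if_neg h1, if_pos h2]; exact ⟨fun h => ⟨h2, h⟩, fun h => h.2⟩
    · simp only [if_neg h1, if_neg h2]; exact Iff.rfl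

/-- A one-point embedding picking out a point of a coherence space. -/
def ptEmb {W : CohSpace} (y : W.web) : CohEmb oneCoh W where
  toFun _ := y
  inj _ _ _ := Subsingleton.elim (α := PUnit) _ _
  coh_iff _ _ := ⟨fun _ => W.refl y, fun _ => trivial⟩

/-- The glued tuple of coherence spaces. -/
noncomputable def glueZ {n : ℕ} {X Y : CohTuple n} (ι : X ⟶ Y) : CohTuple n :=
  fun i => glueSpace (ι i)

/-- First copy embedding of tuples. -/
noncomputable def glueE1t {n : ℕ} {X Y : CohTuple n} (ι : X ⟶ Y) : Y ⟶ glueZ ι :=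
  fun i => glueE1 (ι i)

/-- Second copy embedding of tuples. -/
noncomputable def glueE2t {n : ℕ} {X Y : CohTuple n} (ι : X ⟶ Y) : Y ⟶ glueZ ι :=
  fun i => glueE2 (ι i)

lemma glue_comm {n : ℕ} {X Y : CohTuple n} (ι : X ⟶ Y) :
    ι ≫ glueE1t ι = ι ≫ glueE2t ι := by
  funext i
  apply CohEmb.ext
  funext x
  show Sum.inl ((ι i).toFun x) = _
  exact (if_pos ⟨x, rfl⟩).symm

lemma glue_cone_eq {n : ℕ} {X Y : CohTuple n} (ι : X ⟶ Y)
    (s : PullbackCone (glueE1t ι) (glueE2t ι)) (i : Fin n) (w : (s.pt i).web) :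
    (s.fst i).toFun w = (s.snd i).toFun w ∧
      (s.fst i).toFun w ∈ Set.range (ι i).toFun := by
  have h : Sum.inl ((s.fst i).toFun w) = (glueE2 (ι i)).toFun ((s.snd i).toFun w) :=
    congrFun (congrArg CohEmb.toFun (congrFun s.condition i)) w
  by_cases hm : (s.snd i).toFun w ∈ Set.range (ι i).toFun
  · rw [show (glueE2 (ι i)).toFun ((s.snd i).toFun w)
        = Sum.inl ((s.snd i).toFun w) from if_pos hm] at h
    have he := Sum.inl.inj h
    exact ⟨he, he ▸ hm⟩
  · rw [show (glueE2 (ι i)).toFun ((s.snd i).toFun w)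
        = Sum.inr ((s.snd i).toFun w) from if_neg hm] at h
    cases h

/-- The lift to the pullback of the gluing diagram. -/
noncomputable def glueLift {n : ℕ} {X Y : CohTuple n} (ι : X ⟶ Y)
    (s : PullbackCone (glueE1t ι) (glueE2t ι)) : s.pt ⟶ X := fun i =>
  { toFun := fun w => ((glue_cone_eq ι s i w).2).choose
    inj := by
      intro w w' h
      have h' : ((glue_cone_eq ι s i w).2).choose = ((glue_cone_eq ι s i w').2).choose := h
      apply (s.fst i).inj
      rw [← (glue_cone_eq ι s i w).2.choose_spec,
        ← (glue_cone_eq ι s i w').2.choose_spec, h']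
    coh_iff := by
      intro w w'
      have h1 := (s.fst i).coh_iff w w'
      have h2 := (ι i).coh_iff ((glue_cone_eq ι s i w).2).choose
        ((glue_cone_eq ι s i w').2).choose
      rw [(glue_cone_eq ι s i w).2.choose_spec,
        (glue_cone_eq ι s i w').2.choose_spec] at h2
      exact h1.trans h2.symm }

/-- `X` is the pullback of the two copies of `Y` inside the glued tuple. -/
noncomputable def glueIsLimit {n : ℕ} {X Y : CohTuple n} (ι : X ⟶ Y) :
    IsLimit (PullbackCone.mk ι ι (glue_comm ι)) := by
  refine PullbackCone.IsLimit.mk (glue_comm ι) (glueLift ι) ?_ ?_ ?_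
  · intro s
    funext i
    apply CohEmb.ext
    funext w
    exact (glue_cone_eq ι s i w).2.choose_spec
  · intro s
    funext i
    apply CohEmb.ext
    funext w
    exact (glue_cone_eq ι s i w).2.choose_spec.trans (glue_cone_eq ι s i w).1
  · intro s m hm₁ _
    funext i
    apply CohEmb.ext
    funext w
    apply (ι i).inj
    have h1 : (ι i).toFun (((m i)).toFun w) = (s.fst i).toFun w :=
      congrFun (congrArg CohEmb.toFun (congrFun hm₁ i)) w
    exact h1.trans (glue_cone_eq ι s i w).2.choose_spec.symm

/-- Points identified by the two copy embeddings come from `X`, for a normal functor. -/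
lemma exists_preimage {n : ℕ} (G : CohTuple n ⥤ CohSpace) (hG : IsNormalFunctor G)
    {X Y : CohTuple n} (ι : X ⟶ Y) (y : (G.obj Y).web)
    (hy : (G.map (glueE1t ι)).toFun y = (G.map (glueE2t ι)).toFun y) :
    ∃ x, (G.map ι).toFun x = y := by
  haveI := hG.2
  have hlim2 := isLimitPullbackConeMapOfIsLimit G (glue_comm ι) (glueIsLimit ι)
  have hcomm : ptEmb y ≫ G.map (glueE1t ι) = ptEmb y ≫ G.map (glueE2t ι) := by
    apply CohEmb.ext
    funext _
    exact hy
  refine ⟨(PullbackCone.IsLimit.lift hlim2 (ptEmb y) (ptEmb y) hcomm).toFun PUnit.unit, ?_⟩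
  have hfac := PullbackCone.IsLimit.lift_fst hlim2 (ptEmb y) (ptEmb y) hcomm
  exact congrFun (congrArg CohEmb.toFun hfac) PUnit.unit

-- STATEMENT 2
theorem stmt2 {n : ℕ} (F G H : CohTuple n ⥤ CohSpace)
    (hF : IsNormalFunctor F) (hG : IsNormalFunctor G) (hH : IsNormalFunctor H)
    (f : ∀ X : CohTuple n, Set ((F.obj X).web × (G.obj X).web))
    (g : ∀ X : CohTuple n, Set ((G.obj X).web × (H.obj X).web))
    (hf : IsUniformFamily (lollyF F G) f) (hg : IsUniformFamily (lollyF G H) g) :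
    IsUniformFamily (lollyF F H)
      (fun X => { p | ∃ y, (p.1, y) ∈ f X ∧ (y, p.2) ∈ g X }) := by
  constructor
  · -- clique part
    intro X p hp q hq
    obtain ⟨y, hpf, hpg⟩ := hp
    obtain ⟨y', hqf, hqg⟩ := hq
    by_cases hpq : p = q
    · exact Or.inl hpq
    refine Or.inr ?_
    rintro ⟨hxx, hzz⟩
    have hfc : (p.1, y) = (q.1, y') ∨
        ¬ ((F.obj X).coh p.1 q.1 ∧ (y = y' ∨ ¬ (G.obj X).coh y y')) :=
      hf.1 X hpf hqf
    have hgc : (y, p.2) = (y', q.2) ∨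
        ¬ ((G.obj X).coh y y' ∧ (p.2 = q.2 ∨ ¬ (H.obj X).coh p.2 q.2)) :=
      hg.1 X hpg hqg
    rcases hfc with heq | hne
    · have h1 : p.1 = q.1 := congrArg (fun r : (F.obj X).web × (G.obj X).web => r.1) heq
      have h2 : y = y' := congrArg (fun r : (F.obj X).web × (G.obj X).web => r.2) heq
      subst h2
      rcases hgc with heq2 | hne2
      · exact hpq (Prod.ext h1 (congrArg (fun r : (G.obj X).web × (H.obj X).web => r.2) heq2))
      · exact hne2 ⟨(G.obj X).refl y, hzz⟩
    · have hyy : ¬ (y = y' ∨ ¬ (G.obj X).coh y y') := fun h => hne ⟨hxx, h⟩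
      push_neg at hyy
      rcases hgc with heq2 | hne2
      · exact hyy.1 (congrArg (fun r : (G.obj X).web × (H.obj X).web => r.1) heq2)
      · exact hne2 ⟨hyy.2, hzz⟩
  · -- uniformity part
    intro X Y ι
    ext p
    simp only [Set.mem_preimage, Set.mem_setOf_eq]
    constructor
    · rintro ⟨y, hpf, hpg⟩
      rw [hf.2 X Y ι] at hpf
      rw [hg.2 X Y ι] at hpg
      exact ⟨(G.map ι).toFun y, hpf, hpg⟩
    · rintro ⟨y', h1, h2⟩
      -- the key: y' comes from X via the gluing argument
      have hFcomm : (F.map (glueE1t ι)).toFun ((F.map ι).toFun p.1)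
          = (F.map (glueE2t ι)).toFun ((F.map ι).toFun p.1) := by
        have h : F.map (ι ≫ glueE1t ι) = F.map (ι ≫ glueE2t ι) := congrArg F.map (glue_comm ι)
        rw [F.map_comp, F.map_comp] at h
        exact congrFun (congrArg CohEmb.toFun h) p.1
      have hHcomm : (H.map (glueE1t ι)).toFun ((H.map ι).toFun p.2)
          = (H.map (glueE2t ι)).toFun ((H.map ι).toFun p.2) := by
        have h : H.map (ι ≫ glueE1t ι) = H.map (ι ≫ glueE2t ι) := congrArg H.map (glue_comm ι)
        rw [H.map_comp, H.map_comp] at h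
        exact congrFun (congrArg CohEmb.toFun h) p.2
      have hf1 : ((F.map (glueE1t ι)).toFun ((F.map ι).toFun p.1),
          (G.map (glueE1t ι)).toFun y') ∈ f (glueZ ι) := by
        have h := h1
        rw [hf.2 Y (glueZ ι) (glueE1t ι)] at h
        exact h
      have hf2 : ((F.map (glueE2t ι)).toFun ((F.map ι).toFun p.1),
          (G.map (glueE2t ι)).toFun y') ∈ f (glueZ ι) := by
        have h := h1
        rw [hf.2 Y (glueZ ι) (glueE2t ι)] at h
        exact h
      have hg1 : ((G.map (glueE1t ι)).toFun y',
          (H.map (glueE1t ι)).toFun ((H.map ι).toFun p.2)) ∈ g (glueZ ι) := by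
        have h := h2
        rw [hg.2 Y (glueZ ι) (glueE1t ι)] at h
        exact h
      have hg2 : ((G.map (glueE2t ι)).toFun y',
          (H.map (glueE2t ι)).toFun ((H.map ι).toFun p.2)) ∈ g (glueZ ι) := by
        have h := h2
        rw [hg.2 Y (glueZ ι) (glueE2t ι)] at h
        exact h
      set a := (G.map (glueE1t ι)).toFun y' with ha
      set b := (G.map (glueE2t ι)).toFun y' with hb
      have hab : a = b := by
        by_contra hab
        have hO : ((F.map (glueE1t ι)).toFun ((F.map ι).toFun p.1), a)
            = ((F.map (glueE2t ι)).toFun ((F.map ι).toFun p.1), b) ∨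
            ¬ ((F.obj (glueZ ι)).coh ((F.map (glueE1t ι)).toFun ((F.map ι).toFun p.1))
                ((F.map (glueE2t ι)).toFun ((F.map ι).toFun p.1)) ∧
              (a = b ∨ ¬ (G.obj (glueZ ι)).coh a b)) :=
          hf.1 (glueZ ι) hf1 hf2
        rcases hO with he | hne
        · exact hab (congrArg (fun r : (F.obj (glueZ ι)).web × (G.obj (glueZ ι)).web => r.2) he)
        · have hcoh : ¬ (a = b ∨ ¬ (G.obj (glueZ ι)).coh a b) := fun hh =>
            hne ⟨hFcomm ▸ (F.obj (glueZ ι)).refl _, hh⟩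
          push_neg at hcoh
          have hgO : (a, (H.map (glueE1t ι)).toFun ((H.map ι).toFun p.2))
              = (b, (H.map (glueE2t ι)).toFun ((H.map ι).toFun p.2)) ∨
              ¬ ((G.obj (glueZ ι)).coh a b ∧
                ((H.map (glueE1t ι)).toFun ((H.map ι).toFun p.2)
                    = (H.map (glueE2t ι)).toFun ((H.map ι).toFun p.2) ∨
                  ¬ (H.obj (glueZ ι)).coh ((H.map (glueE1t ι)).toFun ((H.map ι).toFun p.2))
                    ((H.map (glueE2t ι)).toFun ((H.map ι).toFun p.2)))) :=
            hg.1 (glueZ ι) hg1 hg2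
          rcases hgO with he2 | hne2
          · exact hab (congrArg (fun r : (G.obj (glueZ ι)).web × (H.obj (glueZ ι)).web => r.1) he2)
          · exact hne2 ⟨hcoh.2, Or.inl hHcomm⟩
      obtain ⟨y, hy⟩ := exists_preimage G hG ι y' (ha ▸ hb ▸ hab)
      refine ⟨y, ?_, ?_⟩
      · rw [hf.2 X Y ι]
        show ((F.map ι).toFun p.1, (G.map ι).toFun y) ∈ f Y
        rw [hy]
        exact h1
      · rw [hg.2 X Y ι]
        show ((G.map ι).toFun y, (H.map ι).toFun p.2) ∈ g Y
        rw [hy]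
        exact h2
end

section
/- Girard's normal form theorem: let F : CohI^n → CohI be a functor, |F| the Set-valued functor obtained by composing F with the web functor, and El(|F|) its category of elements. Then F preserves filtered colimits and finite pullbacks if and only if for every n-tuple X⃗ of coherence spaces and every x ∈ |F(X⃗)|, the slice category El(|F|)/(X⃗, x) admits an initial object (X⃗', x') in which every component X'_i has a finite web. Moreover, in that case, any such (X⃗', x') is initial in its own slice category El(|F|)/(X⃗', x'). -/
open CategoryTheory Limits

/-! ### Auxiliary machinery for Girard's normal form theorem -/

namespace Stmt3Aux

open CategoryTheory Limits

/-- Applying a composite embedding. -/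
lemma emb_comp {X Y Z : CohSpace} (f : X ⟶ Y) (g : Y ⟶ Z) (a : X.web) :
    (f ≫ g).toFun a = g.toFun (f.toFun a) := rfl

/-- `F.map` of a composite, applied to an element. -/
lemma Fmap_comp {n : ℕ} (F : CohTuple n ⥤ CohSpace) {X Y Z : CohTuple n}
    (f : X ⟶ Y) (g : Y ⟶ Z) (a : (F.obj X).web) :
    (F.map (f ≫ g)).toFun a = (F.map g).toFun ((F.map f).toFun a) := by
  rw [F.map_comp]; rfl

/-- The subspace of a coherence space determined by a subset of the web. -/
def subSpace (X : CohSpace) (S : Set X.web) : CohSpace where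
  web := S
  coh a b := X.coh a.1 b.1
  refl a := X.refl a.1
  symm h := X.symm h

/-- The inclusion of a subspace. -/
def subIncl (X : CohSpace) (S : Set X.web) : subSpace X S ⟶ X :=
  ⟨Subtype.val, Subtype.val_injective, fun _ _ => Iff.rfl⟩

/-- The inclusion between nested subspaces. -/
def subMap (X : CohSpace) {S T : Set X.web} (h : S ⊆ T) : subSpace X S ⟶ subSpace X T where
  toFun a := ⟨a.1, h a.2⟩
  inj := by
    intro a b hab
    have h2 := congrArg Subtype.val hab
    exact Subtype.ext h2
  coh_iff _ _ := Iff.rfl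

variable {n : ℕ}

/-- The tuple of subspaces determined by a tuple of subsets. -/
def spaceOf {X : CohTuple n} (S : ∀ i, Set ((X i).web)) : CohTuple n :=
  fun i => subSpace (X i) (S i)

/-- The inclusion of a tuple of subspaces. -/
def inclOf {X : CohTuple n} (S : ∀ i, Set ((X i).web)) : spaceOf S ⟶ X :=
  fun i => subIncl (X i) (S i)

/-- The inclusion between nested tuples of subspaces. -/
def mapOf {X : CohTuple n} {S T : ∀ i, Set ((X i).web)} (h : ∀ i, S i ⊆ T i) :
    spaceOf S ⟶ spaceOf T :=
  fun i => subMap (X i) (h i)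

section Cocones

variable {J : Type*} [Category J]

lemma cocone_w_apply {D : J ⥤ CohSpace} (c : Cocone D) {j j' : J} (f : j ⟶ j')
    (a : (D.obj j).web) : (c.ι.app j').toFun ((D.map f).toFun a) = (c.ι.app j).toFun a :=
  congrFun (congrArg CohEmb.toFun (c.w f)) a

lemma pi_cocone_w_apply {D : J ⥤ CohTuple n} (c : Cocone D) {j j' : J} (f : j ⟶ j')
    (i : Fin n) (a : ((D.obj j) i).web) :
    ((c.ι.app j') i).toFun (((D.map f) i).toFun a) = ((c.ι.app j) i).toFun a :=
  congrFun (congrArg CohEmb.toFun (congrFun (c.w f) i)) a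

lemma exchange [IsFiltered J] {D : J ⥤ CohSpace} (c s : Cocone D)
    {j j' : J} {a : (D.obj j).web} {a' : (D.obj j').web}
    (h : (c.ι.app j).toFun a = (c.ι.app j').toFun a') :
    (s.ι.app j).toFun a = (s.ι.app j').toFun a' := by
  obtain ⟨k, u, v, -⟩ := IsFilteredOrEmpty.cocone_objs j j'
  have hD : (D.map u).toFun a = (D.map v).toFun a' :=
    (c.ι.app k).inj (by rw [cocone_w_apply c u a, cocone_w_apply c v a', h])
  rw [← cocone_w_apply s u a, ← cocone_w_apply s v a', hD]

lemma pi_exchange [IsFiltered J] {D : J ⥤ CohTuple n} (c s : Cocone D) {i : Fin n}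
    {j j' : J} {a : ((D.obj j) i).web} {a' : ((D.obj j') i).web}
    (h : ((c.ι.app j) i).toFun a = ((c.ι.app j') i).toFun a') :
    ((s.ι.app j) i).toFun a = ((s.ι.app j') i).toFun a' := by
  obtain ⟨k, u, v, -⟩ := IsFilteredOrEmpty.cocone_objs j j'
  have hD : ((D.map u) i).toFun a = ((D.map v) i).toFun a' :=
    ((c.ι.app k) i).inj
      (by rw [pi_cocone_w_apply c u i a, pi_cocone_w_apply c v i a', h])
  rw [← pi_cocone_w_apply s u i a, ← pi_cocone_w_apply s v i a', hD]

/-- A cocone over a filtered diagram of coherence spaces whose images cover the apex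
is a colimit cocone. -/
noncomputable def isColimitOfCovered [IsFiltered J] {D : J ⥤ CohSpace} (c : Cocone D)
    (hcov : ∀ x : c.pt.web, ∃ j a, (c.ι.app j).toFun a = x) : IsColimit c := by
  choose jf af haf using hcov
  have dspec : ∀ (s : Cocone D) (j : J) (a : (D.obj j).web),
      (s.ι.app (jf ((c.ι.app j).toFun a))).toFun (af ((c.ι.app j).toFun a))
        = (s.ι.app j).toFun a :=
    fun s j a => exchange c s (haf ((c.ι.app j).toFun a))
  refine
    { desc := fun s =>
        { toFun := fun x => (s.ι.app (jf x)).toFun (af x)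
          inj := by
            intro x x' h
            have h2 := exchange s c h
            rw [haf x, haf x'] at h2
            exact h2
          coh_iff := by
            intro x x'
            obtain ⟨k, u, v, -⟩ := IsFilteredOrEmpty.cocone_objs (jf x) (jf x')
            have e1 : (c.ι.app k).toFun ((D.map u).toFun (af x)) = x := by
              rw [cocone_w_apply c u, haf x]
            have e2 : (c.ι.app k).toFun ((D.map v).toFun (af x')) = x' := by
              rw [cocone_w_apply c v, haf x']
            have e3 := cocone_w_apply s u (af x)
            have e4 := cocone_w_apply s v (af x')
            have main := ((c.ι.app k).coh_iff ((D.map u).toFun (af x))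
                ((D.map v).toFun (af x'))).symm.trans ((s.ι.app k).coh_iff _ _)
            rw [e1, e2, e3, e4] at main
            exact main }
      fac := by
        intro s j
        apply CohEmb.ext; funext a
        exact dspec s j a
      uniq := by
        intro s m hm
        apply CohEmb.ext; funext x
        have h1 : m.toFun ((c.ι.app (jf x)).toFun (af x))
            = (s.ι.app (jf x)).toFun (af x) :=
          congrFun (congrArg CohEmb.toFun (hm (jf x))) (af x)
        rw [haf x] at h1
        exact h1 }

/-- A colimit cocone of coherence spaces is covered by the images of its legs. -/
lemma covered_of_isColimit {D : J ⥤ CohSpace} (c : Cocone D) (hc : IsColimit c)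
    (x : c.pt.web) : ∃ j a, (c.ι.app j).toFun a = x := by
  let U : Set c.pt.web := ⋃ j, Set.range (c.ι.app j).toFun
  let s : Cocone D :=
    { pt := subSpace c.pt U
      ι :=
        { app := fun j =>
            { toFun := fun a => ⟨(c.ι.app j).toFun a, Set.mem_iUnion.2 ⟨j, a, rfl⟩⟩
              inj := by
                intro a a' h
                have h2 := congrArg Subtype.val h
                exact (c.ι.app j).inj h2
              coh_iff := fun a a' => (c.ι.app j).coh_iff a a' }
          naturality := by
            intro j j' f
            apply CohEmb.ext; funext a
            apply Subtype.ext
            exact cocone_w_apply c f a } }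
  have hu : hc.desc s ≫ subIncl c.pt U = 𝟙 c.pt := by
    apply hc.hom_ext
    intro j
    rw [← Category.assoc, hc.fac s j]
    apply CohEmb.ext; funext a; rfl
  have h2 : ((hc.desc s).toFun x).1 = x :=
    congrFun (congrArg CohEmb.toFun hu) x
  obtain ⟨j, hj⟩ := Set.mem_iUnion.1 ((hc.desc s).toFun x).2
  obtain ⟨a, ha⟩ := hj
  exact ⟨j, a, ha.trans h2⟩

/-- A cocone over a filtered diagram in `CohI^n` whose images cover the apex componentwise
is a colimit cocone. -/
noncomputable def pi_isColimitOfCovered [IsFiltered J] {D : J ⥤ CohTuple n} (c : Cocone D)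
    (hcov : ∀ (i : Fin n) (x : ((c.pt) i).web), ∃ j a, ((c.ι.app j) i).toFun a = x) :
    IsColimit c := by
  choose jf af haf using hcov
  have dspec : ∀ (s : Cocone D) (i : Fin n) (j : J) (a : ((D.obj j) i).web),
      ((s.ι.app (jf i (((c.ι.app j) i).toFun a))) i).toFun (af i (((c.ι.app j) i).toFun a))
        = ((s.ι.app j) i).toFun a :=
    fun s i j a => pi_exchange c s (haf i (((c.ι.app j) i).toFun a))
  refine
    { desc := fun s => fun i =>
        { toFun := fun x => ((s.ι.app (jf i x)) i).toFun (af i x)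
          inj := by
            intro x x' h
            have h2 := pi_exchange s c (i := i) h
            rw [haf i x, haf i x'] at h2
            exact h2
          coh_iff := by
            intro x x'
            obtain ⟨k, u, v, -⟩ := IsFilteredOrEmpty.cocone_objs (jf i x) (jf i x')
            have e1 : ((c.ι.app k) i).toFun (((D.map u) i).toFun (af i x)) = x := by
              rw [pi_cocone_w_apply c u i, haf i x]
            have e2 : ((c.ι.app k) i).toFun (((D.map v) i).toFun (af i x')) = x' := by
              rw [pi_cocone_w_apply c v i, haf i x']
            have e3 := pi_cocone_w_apply s u i (af i x)
            have e4 := pi_cocone_w_apply s v i (af i x')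
            have main := (((c.ι.app k) i).coh_iff (((D.map u) i).toFun (af i x))
                (((D.map v) i).toFun (af i x'))).symm.trans (((s.ι.app k) i).coh_iff _ _)
            rw [e1, e2, e3, e4] at main
            exact main }
      fac := by
        intro s j
        funext i
        apply CohEmb.ext; funext a
        exact dspec s i j a
      uniq := by
        intro s m hm
        funext i
        apply CohEmb.ext; funext x
        have h1 : (m i).toFun (((c.ι.app (jf i x)) i).toFun (af i x))
            = ((s.ι.app (jf i x)) i).toFun (af i x) :=
          congrFun (congrArg CohEmb.toFun (congrFun (hm (jf i x)) i)) (af i x)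
        rw [haf i x] at h1
        exact h1 }

/-- A colimit cocone in `CohI^n` is covered componentwise by the images of its legs. -/
lemma pi_covered_of_isColimit {D : J ⥤ CohTuple n} (c : Cocone D) (hc : IsColimit c)
    (i : Fin n) (x : ((c.pt) i).web) : ∃ j a, ((c.ι.app j) i).toFun a = x := by
  let U : ∀ k, Set (((c.pt) k).web) := fun k => ⋃ j, Set.range ((c.ι.app j) k).toFun
  let s : Cocone D :=
    { pt := spaceOf U
      ι :=
        { app := fun j => fun k =>
            { toFun := fun a => ⟨((c.ι.app j) k).toFun a, Set.mem_iUnion.2 ⟨j, a, rfl⟩⟩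
              inj := by
                intro a a' h
                have h2 := congrArg Subtype.val h
                exact ((c.ι.app j) k).inj h2
              coh_iff := fun a a' => ((c.ι.app j) k).coh_iff a a' }
          naturality := by
            intro j j' f
            funext k
            apply CohEmb.ext; funext a
            apply Subtype.ext
            exact pi_cocone_w_apply c f k a } }
  have hu : hc.desc s ≫ inclOf U = 𝟙 c.pt := by
    apply hc.hom_ext
    intro j
    rw [← Category.assoc, hc.fac s j]
    funext k
    apply CohEmb.ext; funext a; rfl
  have h2 : (((hc.desc s) i).toFun x).1 = x :=
    congrFun (congrArg CohEmb.toFun (congrFun hu i)) x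
  obtain ⟨j, hj⟩ := Set.mem_iUnion.1 (((hc.desc s) i).toFun x).2
  obtain ⟨a, ha⟩ := hj
  exact ⟨j, a, ha.trans h2⟩

end Cocones

section Pullbacks

/-- A commuting square of coherence spaces which is surjective on compatible pairs
is a pullback. -/
noncomputable def pbIsLimitOfSur {X Y Z P : CohSpace} {f : X ⟶ Z} {g : Y ⟶ Z}
    {p : P ⟶ X} {q : P ⟶ Y} (comm : p ≫ f = q ≫ g)
    (sur : ∀ x y, f.toFun x = g.toFun y → ∃ w, p.toFun w = x ∧ q.toFun w = y) :
    IsLimit (PullbackCone.mk p q comm) := by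
  have compat : ∀ (s : PullbackCone f g) (a : s.pt.web),
      f.toFun (s.fst.toFun a) = g.toFun (s.snd.toFun a) :=
    fun s a => congrFun (congrArg CohEmb.toFun s.condition) a
  choose w hw1 hw2 using fun (s : PullbackCone f g) (a : s.pt.web) => sur _ _ (compat s a)
  refine PullbackCone.IsLimit.mk comm
    (fun s =>
      { toFun := fun a => w s a
        inj := by
          intro a a' h
          apply s.fst.inj
          rw [← hw1 s a, ← hw1 s a']
          exact congrArg p.toFun h
        coh_iff := by
          intro a a'
          have h3 := p.coh_iff (w s a) (w s a')
          rw [hw1 s a, hw1 s a'] at h3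
          exact (s.fst.coh_iff a a').trans h3.symm }) ?_ ?_ ?_
  · intro s
    apply CohEmb.ext; funext a
    exact hw1 s a
  · intro s
    apply CohEmb.ext; funext a
    exact hw2 s a
  · intro s m h1 _
    apply CohEmb.ext; funext a
    apply p.inj
    have hm : p.toFun (m.toFun a) = s.fst.toFun a :=
      congrFun (congrArg CohEmb.toFun h1) a
    exact hm.trans (hw1 s a).symm

/-- A commuting square in `CohI^n` which is componentwise surjective on compatible pairs
is a pullback. -/
noncomputable def pbIsLimitOfSurPi {X Y Z P : CohTuple n} {f : X ⟶ Z} {g : Y ⟶ Z}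
    {p : P ⟶ X} {q : P ⟶ Y} (comm : p ≫ f = q ≫ g)
    (sur : ∀ (i : Fin n) a b, (f i).toFun a = (g i).toFun b →
      ∃ w, (p i).toFun w = a ∧ (q i).toFun w = b) :
    IsLimit (PullbackCone.mk p q comm) := by
  have compat : ∀ (s : PullbackCone f g) (i : Fin n) (a : ((s.pt) i).web),
      (f i).toFun ((s.fst i).toFun a) = (g i).toFun ((s.snd i).toFun a) :=
    fun s i a => congrFun (congrArg CohEmb.toFun (congrFun s.condition i)) a
  choose w hw1 hw2 using
    fun (s : PullbackCone f g) (i : Fin n) (a : ((s.pt) i).web) => sur i _ _ (compat s i a)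
  refine PullbackCone.IsLimit.mk comm
    (fun s => fun i =>
      { toFun := fun a => w s i a
        inj := by
          intro a a' h
          apply (s.fst i).inj
          rw [← hw1 s i a, ← hw1 s i a']
          exact congrArg (p i).toFun h
        coh_iff := by
          intro a a'
          have h3 := (p i).coh_iff (w s i a) (w s i a')
          rw [hw1 s i a, hw1 s i a'] at h3
          exact ((s.fst i).coh_iff a a').trans h3.symm }) ?_ ?_ ?_
  · intro s
    funext i
    apply CohEmb.ext; funext a
    exact hw1 s i a
  · intro s
    funext i
    apply CohEmb.ext; funext a
    exact hw2 s i a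
  · intro s m h1 _
    funext i
    apply CohEmb.ext; funext a
    apply (p i).inj
    have hm : (p i).toFun ((m i).toFun a) = (s.fst i).toFun a :=
      congrFun (congrArg CohEmb.toFun (congrFun h1 i)) a
    exact hm.trans (hw1 s i a).symm

/-- Extraction of compatible pairs from a pullback of coherence spaces. -/
lemma pb_extract {X Y Z : CohSpace} {f : X ⟶ Z} {g : Y ⟶ Z} (t : PullbackCone f g)
    (ht : IsLimit t) (x : X.web) (y : Y.web) (hxy : f.toFun x = g.toFun y) :
    ∃ w, t.fst.toFun w = x ∧ t.snd.toFun w = y := by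
  let hx : oneCoh ⟶ X :=
    ⟨fun _ => x, fun a b _ => @Subsingleton.elim _ (inferInstanceAs (Subsingleton PUnit)) a b,
      fun _ _ => iff_of_true trivial (X.refl x)⟩
  let hy : oneCoh ⟶ Y :=
    ⟨fun _ => y, fun a b _ => @Subsingleton.elim _ (inferInstanceAs (Subsingleton PUnit)) a b,
      fun _ _ => iff_of_true trivial (Y.refl y)⟩
  have comm : hx ≫ f = hy ≫ g := by
    apply CohEmb.ext; funext a; exact hxy
  refine ⟨(PullbackCone.IsLimit.lift ht hx hy comm).toFun PUnit.unit, ?_, ?_⟩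
  · exact congrFun (congrArg CohEmb.toFun (PullbackCone.IsLimit.lift_fst ht hx hy comm))
      PUnit.unit
  · exact congrFun (congrArg CohEmb.toFun (PullbackCone.IsLimit.lift_snd ht hx hy comm))
      PUnit.unit

/-- Componentwise extraction of compatible pairs from a pullback in `CohI^n`. -/
lemma pb_extract_pi {X Y Z : CohTuple n} {f : X ⟶ Z} {g : Y ⟶ Z} (t : PullbackCone f g)
    (ht : IsLimit t) (i : Fin n) (a : (X i).web) (b : (Y i).web)
    (hab : (f i).toFun a = (g i).toFun b) :
    ∃ w, (t.fst i).toFun w = a ∧ (t.snd i).toFun w = b := by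
  let W : CohTuple n := fun k =>
    { web := { ab : (X k).web × (Y k).web // (f k).toFun ab.1 = (g k).toFun ab.2 }
      coh := fun u v => (X k).coh u.1.1 v.1.1
      refl := fun u => (X k).refl u.1.1
      symm := fun h => (X k).symm h }
  let p1 : W ⟶ X := fun k =>
    { toFun := fun u => u.1.1
      inj := by
        intro u v h
        have h' : u.1.1 = v.1.1 := h
        have h2 : (g k).toFun u.1.2 = (g k).toFun v.1.2 := by rw [← u.2, ← v.2, h']
        exact Subtype.ext (Prod.ext h' ((g k).inj h2))
      coh_iff := fun _ _ => Iff.rfl }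
  let p2 : W ⟶ Y := fun k =>
    { toFun := fun u => u.1.2
      inj := by
        intro u v h
        have h' : u.1.2 = v.1.2 := h
        have h2 : (f k).toFun u.1.1 = (f k).toFun v.1.1 := by rw [u.2, v.2, h']
        exact Subtype.ext (Prod.ext ((f k).inj h2) h')
      coh_iff := by
        intro u v
        show (X k).coh u.1.1 v.1.1 ↔ (Y k).coh u.1.2 v.1.2
        rw [(f k).coh_iff, u.2, v.2, ← (g k).coh_iff] }
  have comm : p1 ≫ f = p2 ≫ g := by
    funext k
    apply CohEmb.ext; funext u
    exact u.2
  refine ⟨((PullbackCone.IsLimit.lift ht p1 p2 comm) i).toFun ⟨(a, b), hab⟩, ?_, ?_⟩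
  · have h1 : (t.fst i).toFun (((PullbackCone.IsLimit.lift ht p1 p2 comm) i).toFun
        ⟨(a, b), hab⟩) = (p1 i).toFun ⟨(a, b), hab⟩ :=
      congrFun (congrArg CohEmb.toFun
        (congrFun (PullbackCone.IsLimit.lift_fst ht p1 p2 comm) i)) ⟨(a, b), hab⟩
    exact h1
  · have h1 : (t.snd i).toFun (((PullbackCone.IsLimit.lift ht p1 p2 comm) i).toFun
        ⟨(a, b), hab⟩) = (p2 i).toFun ⟨(a, b), hab⟩ :=
      congrFun (congrArg CohEmb.toFun
        (congrFun (PullbackCone.IsLimit.lift_snd ht p1 p2 comm) i)) ⟨(a, b), hab⟩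
    exact h1

end Pullbacks

section Main

variable {n : ℕ}

/-- The directed poset of tuples of finite subsets of the webs of `X`. -/
def FinSub (X : CohTuple n) : Type := { S : ∀ i, Set ((X i).web) // ∀ i, (S i).Finite }

instance {X : CohTuple n} : Preorder (FinSub X) where
  le S T := ∀ i, S.1 i ⊆ T.1 i
  le_refl S i := subset_rfl
  le_trans S T U h h' i := (h i).trans (h' i)

instance {X : CohTuple n} : Nonempty (FinSub X) :=
  ⟨⟨fun _ => ∅, fun _ => Set.finite_empty⟩⟩

instance {X : CohTuple n} : IsDirected (FinSub X) (· ≤ ·) :=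
  ⟨fun S T => ⟨⟨fun i => S.1 i ∪ T.1 i, fun i => (S.2 i).union (T.2 i)⟩,
    fun i => Set.subset_union_left, fun i => Set.subset_union_right⟩⟩

/-- The diagram of finite subtuples of `X`. -/
def subDiagram (X : CohTuple n) : FinSub X ⥤ CohTuple n where
  obj S := spaceOf S.1
  map {S T} h := mapOf (leOfHom h)
  map_id S := rfl
  map_comp f g := rfl

/-- The canonical cocone over the diagram of finite subtuples, with apex `X`. -/
def subCocone (X : CohTuple n) : Cocone (subDiagram X) where
  pt := X
  ι :=
    { app := fun S => inclOf S.1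
      naturality := by
        intro S T h
        funext i
        apply CohEmb.ext; funext a
        rfl }

noncomputable def subCoconeColimit (X : CohTuple n) : IsColimit (subCocone X) := by
  apply pi_isColimitOfCovered
  intro i xi
  classical
  refine ⟨⟨fun k => if h : i = k then {h ▸ xi} else ∅, ?_⟩, ⟨xi, ?_⟩, rfl⟩
  · intro k
    dsimp only
    split
    · exact Set.finite_singleton _
    · exact Set.finite_empty
  · simp
    rfl

/-- `x` factors through the subtuple `T` of `X`. -/
def Fact (F : CohTuple n ⥤ CohSpace) {X : CohTuple n} (x : (F.obj X).web)
    (T : ∀ i, Set ((X i).web)) : Prop :=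
  ∃ a, (F.map (inclOf T)).toFun a = x

/-- Forward direction: a normal functor admits finite normal forms. -/
lemma nfOfNormal (F : CohTuple n ⥤ CohSpace) (hF : IsNormalFunctor F) (e : Elts F) :
    ∃ (e₀ : Elts F) (u₀ : e₀ ⟶ e),
      (∀ i, Finite (e₀.1 i).web) ∧
        ∀ (f : Elts F) (u : f ⟶ e), ∃! v : e₀ ⟶ f, v ≫ u = u₀ := by
  obtain ⟨hfilt, hpb⟩ := hF
  obtain ⟨X, x⟩ := e
  classical
  haveI := hfilt
  haveI := hpb
  -- Step A: `x` factors through some finite subtuple.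
  have hFc : IsColimit (F.mapCocone (subCocone X)) :=
    isColimitOfPreserves F (subCoconeColimit X)
  have stepA : ∃ S : FinSub X, Fact F x S.1 := by
    obtain ⟨S, a, ha⟩ := covered_of_isColimit _ hFc x
    exact ⟨S, a, ha⟩
  -- Step B: the factorization property is stable under intersections.
  have stepB : ∀ S T : ∀ i, Set ((X i).web),
      Fact F x S → Fact F x T → Fact F x (fun i => S i ∩ T i) := by
    intro S T hS hT
    have comm : mapOf (X := X) (S := fun i => S i ∩ T i) (T := S)
          (fun i => Set.inter_subset_left) ≫ inclOf S
        = mapOf (T := T) (fun i => Set.inter_subset_right) ≫ inclOf T := by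
      funext i
      apply CohEmb.ext; funext a
      rfl
    have hlim : IsLimit (PullbackCone.mk _ _ comm) := by
      apply pbIsLimitOfSurPi comm
      intro i a b hab
      have hab' : a.1 = b.1 := hab
      refine ⟨⟨a.1, a.2, ?_⟩, ?_, ?_⟩
      · rw [hab']; exact b.2
      · exact Subtype.ext rfl
      · exact Subtype.ext hab'
    have hmap := isLimitOfPreserves F hlim
    have hFlim := (PullbackCone.isLimitMapConeEquiv _ F) hmap
    obtain ⟨aS, haS⟩ := hS
    obtain ⟨aT, haT⟩ := hT
    obtain ⟨w, hw1, -⟩ := pb_extract _ hFlim aS aT (by rw [haS, haT])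
    have hw1' : (F.map (mapOf (X := X) (S := fun i => S i ∩ T i) (T := S)
        (fun i => Set.inter_subset_left))).toFun w = aS := hw1
    refine ⟨w, ?_⟩
    have hcomp : mapOf (X := X) (S := fun i => S i ∩ T i) (T := S)
          (fun i => Set.inter_subset_left) ≫ inclOf S
        = inclOf (fun i => S i ∩ T i) := by
      funext i
      apply CohEmb.ext; funext a
      rfl
    rw [← hcomp]
    exact (Fmap_comp F _ _ w).trans ((congrArg (F.map (inclOf S)).toFun hw1').trans haS)
  -- Step C: choose a factorization of minimal total cardinality.
  have hex : ∃ m : ℕ, ∃ S : ∀ i, Set ((X i).web), (∀ i, (S i).Finite) ∧ Fact F x S ∧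
      (∑ i, (S i).ncard) = m := by
    obtain ⟨S, hS⟩ := stepA
    exact ⟨∑ i, (S.1 i).ncard, S.1, S.2, hS, rfl⟩
  obtain ⟨S₀, hS₀fin, hS₀, hsum⟩ := Nat.find_spec hex
  have hmin : ∀ T, Fact F x T → ∀ i, S₀ i ⊆ T i := by
    intro T hT
    have hfact := stepB S₀ T hS₀ hT
    have hfinST : ∀ i, (S₀ i ∩ T i).Finite :=
      fun i => (hS₀fin i).subset Set.inter_subset_left
    have hle : Nat.find hex ≤ ∑ i, (S₀ i ∩ T i).ncard :=
      Nat.find_min' hex ⟨fun i => S₀ i ∩ T i, hfinST, hfact, rfl⟩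
    have hcomp : ∀ i ∈ Finset.univ, (S₀ i ∩ T i).ncard ≤ (S₀ i).ncard :=
      fun i _ => Set.ncard_le_ncard Set.inter_subset_left (hS₀fin i)
    have hsum2 : (∑ i, (S₀ i ∩ T i).ncard) = ∑ i, (S₀ i).ncard :=
      le_antisymm (Finset.sum_le_sum hcomp) (by rw [hsum]; exact hle)
    have heq := (Finset.sum_eq_sum_iff_of_le hcomp).1 hsum2
    intro i
    have hi : (S₀ i).ncard ≤ (S₀ i ∩ T i).ncard := (heq i (Finset.mem_univ i)).ge
    have hEq : S₀ i ∩ T i = S₀ i :=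
      Set.eq_of_subset_of_ncard_le Set.inter_subset_left hi (hS₀fin i)
    intro a ha
    rw [← hEq] at ha
    exact ha.2
  -- Step D: the minimal factorization is the normal form.
  obtain ⟨a₀, ha₀⟩ := hS₀
  refine ⟨⟨spaceOf S₀, a₀⟩, ⟨inclOf S₀, ha₀⟩, fun i => (hS₀fin i).to_subtype, ?_⟩
  rintro ⟨Y, y⟩ u
  have hFactR : Fact F x (fun i => Set.range (u.1 i).toFun) := by
    let jm : Y ⟶ spaceOf (X := X) (fun i => Set.range (u.1 i).toFun) := fun i =>
      { toFun := fun b => ⟨(u.1 i).toFun b, Set.mem_range_self b⟩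
        inj := by
          intro b b' h
          have h2 := congrArg Subtype.val h
          exact (u.1 i).inj h2
        coh_iff := fun b b' => (u.1 i).coh_iff b b' }
    refine ⟨(F.map jm).toFun y, ?_⟩
    have hcomp : jm ≫ inclOf (fun i => Set.range (u.1 i).toFun) = u.1 := by
      funext i
      apply CohEmb.ext; funext b
      rfl
    exact (Fmap_comp F jm _ y).symm.trans ((congrArg (fun m => (F.map m).toFun y) hcomp).trans u.2)
  have hsub := hmin _ hFactR
  choose vb hvb using fun (i : Fin n) (a : ((spaceOf (X := X) S₀) i).web) => hsub i a.2
  let v : spaceOf (X := X) S₀ ⟶ Y := fun i =>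
    { toFun := fun a => vb i a
      inj := by
        intro a a' h
        apply Subtype.ext
        rw [← hvb i a, ← hvb i a']
        exact congrArg (u.1 i).toFun h
      coh_iff := by
        intro a a'
        have h3 := (u.1 i).coh_iff (vb i a) (vb i a')
        rw [hvb i a, hvb i a'] at h3
        exact h3.symm }
  have hvcomp : v ≫ u.1 = inclOf S₀ := by
    funext i
    apply CohEmb.ext; funext a
    exact hvb i a
  have hFv : (F.map v).toFun a₀ = y := by
    apply (F.map u.1).inj
    rw [← Fmap_comp, hvcomp, ha₀]
    exact u.2.symm
  refine ⟨⟨v, hFv⟩, Subtype.ext hvcomp, ?_⟩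
  rintro ⟨v', hv'2⟩ hv'
  have hval : v' ≫ u.1 = inclOf S₀ := congrArg Subtype.val hv'
  apply Subtype.ext
  show v' = v
  funext i
  apply CohEmb.ext; funext a
  apply (u.1 i).inj
  have h1 : (u.1 i).toFun ((v' i).toFun a) = ((inclOf (X := X) S₀) i).toFun a :=
    congrFun (congrArg CohEmb.toFun (congrFun hval i)) a
  exact h1.trans (hvb i a).symm

/-- Backward direction: existence of finite normal forms implies normality. -/
lemma normalOfNF (F : CohTuple n ⥤ CohSpace)
    (hNF : ∀ e : Elts F, ∃ (e₀ : Elts F) (u₀ : e₀ ⟶ e),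
        (∀ i, Finite (e₀.1 i).web) ∧
          ∀ (f : Elts F) (u : f ⟶ e), ∃! v : e₀ ⟶ f, v ≫ u = u₀) :
    IsNormalFunctor F := by
  constructor
  · -- preservation of filtered colimits
    refine ⟨fun J _ _ => ⟨fun {K} => ⟨fun {c} hc => ⟨?_⟩⟩⟩⟩
    apply isColimitOfCovered
    intro x
    obtain ⟨e₀, u₀, hfin, -⟩ := hNF ⟨c.pt, x⟩
    haveI : ∀ i, Finite ((e₀.1 i).web) := hfin
    classical
    haveI := Fintype.ofFinite (Σ i : Fin n, (e₀.1 i).web)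
    choose jp ap hap using fun pr : Σ i : Fin n, (e₀.1 i).web =>
      pi_covered_of_isColimit c hc pr.1 ((u₀.1 pr.1).toFun pr.2)
    obtain ⟨St, hSt⟩ := IsFiltered.sup_objs_exists (Finset.image jp Finset.univ)
    have gmap : ∀ pr : Σ i : Fin n, (e₀.1 i).web, jp pr ⟶ St := fun pr =>
      (hSt (Finset.mem_image_of_mem jp (Finset.mem_univ pr))).some
    have hkey : ∀ (i : Fin n) (a : (e₀.1 i).web),
        ((c.ι.app St) i).toFun (((K.map (gmap ⟨i, a⟩)) i).toFun (ap ⟨i, a⟩))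
          = (u₀.1 i).toFun a := by
      intro i a
      rw [pi_cocone_w_apply c (gmap ⟨i, a⟩) i (ap ⟨i, a⟩)]
      exact hap ⟨i, a⟩
    let κ : e₀.1 ⟶ K.obj St := fun i =>
      { toFun := fun a => ((K.map (gmap ⟨i, a⟩)) i).toFun (ap ⟨i, a⟩)
        inj := by
          intro a a' h
          apply (u₀.1 i).inj
          rw [← hkey i a, ← hkey i a']
          exact congrArg ((c.ι.app St) i).toFun h
        coh_iff := by
          intro a a'
          have h3 := ((c.ι.app St) i).coh_iff
            (((K.map (gmap ⟨i, a⟩)) i).toFun (ap ⟨i, a⟩))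
            (((K.map (gmap ⟨i, a'⟩)) i).toFun (ap ⟨i, a'⟩))
          rw [hkey i a, hkey i a'] at h3
          exact ((u₀.1 i).coh_iff a a').trans h3.symm }
    have hcomp : κ ≫ c.ι.app St = u₀.1 := by
      funext i
      apply CohEmb.ext; funext a
      exact hkey i a
    refine ⟨St, (F.map κ).toFun e₀.2, ?_⟩
    have hgoal : (F.map (c.ι.app St)).toFun ((F.map κ).toFun e₀.2) = x := by
      exact (Fmap_comp F κ _ e₀.2).symm.trans
        ((congrArg (fun m => (F.map m).toFun e₀.2) hcomp).trans u₀.2)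
    exact hgoal
  · -- preservation of pullbacks
    have key : ∀ {X Y Z : CohTuple n} (f : X ⟶ Z) (g : Y ⟶ Z),
        PreservesLimit (cospan f g) F := by
      intro X Y Z f g
      refine ⟨fun {c} hc => ?_⟩
      have sur : ∀ (x' : (F.obj X).web) (y' : (F.obj Y).web),
          (F.map f).toFun x' = (F.map g).toFun y' →
          ∃ w : (F.obj c.pt).web,
            (F.map (PullbackCone.fst c)).toFun w = x' ∧
            (F.map (PullbackCone.snd c)).toFun w = y' := by
        intro x' y' hxy
        obtain ⟨e₀, u₀, -, huniv⟩ := hNF ⟨Z, (F.map f).toFun x'⟩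
        obtain ⟨vX, hvX, -⟩ := huniv ⟨X, x'⟩ ⟨f, rfl⟩
        obtain ⟨vY, hvY, -⟩ := huniv ⟨Y, y'⟩ ⟨g, hxy.symm⟩
        have hfX : vX.1 ≫ f = u₀.1 := congrArg Subtype.val hvX
        have hfY : vY.1 ≫ g = u₀.1 := congrArg Subtype.val hvY
        have hel : ∀ (i : Fin n) (a : (e₀.1 i).web),
            (f i).toFun ((vX.1 i).toFun a) = (g i).toFun ((vY.1 i).toFun a) := by
          intro i a
          have h1 : (f i).toFun ((vX.1 i).toFun a) = (u₀.1 i).toFun a :=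
            congrFun (congrArg CohEmb.toFun (congrFun hfX i)) a
          have h2 : (g i).toFun ((vY.1 i).toFun a) = (u₀.1 i).toFun a :=
            congrFun (congrArg CohEmb.toFun (congrFun hfY i)) a
          exact h1.trans h2.symm
        choose wv hwv1 hwv2 using fun (i : Fin n) (a : (e₀.1 i).web) =>
          pb_extract_pi c hc i _ _ (hel i a)
        let κ : e₀.1 ⟶ c.pt := fun i =>
          { toFun := fun a => wv i a
            inj := by
              intro a a' h
              apply (vX.1 i).inj
              rw [← hwv1 i a, ← hwv1 i a']
              exact congrArg (PullbackCone.fst c i).toFun h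
            coh_iff := by
              intro a a'
              have h3 := (PullbackCone.fst c i).coh_iff (wv i a) (wv i a')
              rw [hwv1 i a, hwv1 i a'] at h3
              exact ((vX.1 i).coh_iff a a').trans h3.symm }
        have hκX : κ ≫ PullbackCone.fst c = vX.1 := by
          funext i
          apply CohEmb.ext; funext a
          exact hwv1 i a
        have hκY : κ ≫ PullbackCone.snd c = vY.1 := by
          funext i
          apply CohEmb.ext; funext a
          exact hwv2 i a
        refine ⟨(F.map κ).toFun e₀.2, ?_, ?_⟩
        · exact (Fmap_comp F κ _ e₀.2).symm.trans
            ((congrArg (fun m => (F.map m).toFun e₀.2) hκX).trans vX.2)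
        · exact (Fmap_comp F κ _ e₀.2).symm.trans
            ((congrArg (fun m => (F.map m).toFun e₀.2) hκY).trans vY.2)
      have comm : F.map (PullbackCone.fst c) ≫ F.map f
          = F.map (PullbackCone.snd c) ≫ F.map g := by
        rw [← F.map_comp, ← F.map_comp, PullbackCone.condition]
      exact ⟨(PullbackCone.isLimitMapConeEquiv c F).symm (pbIsLimitOfSur comm sur)⟩
    refine ⟨fun {K} => ?_⟩
    haveI := key (K.map WalkingCospan.Hom.inl) (K.map WalkingCospan.Hom.inr)
    exact preservesLimit_of_iso_diagram F (diagramIsoCospan K).symm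

end Main

end Stmt3Aux
-- STATEMENT 3
theorem stmt3 {n : ℕ} (F : CohTuple n ⥤ CohSpace) :
    (IsNormalFunctor F ↔
      ∀ e : Elts F, ∃ (e₀ : Elts F) (u₀ : e₀ ⟶ e),
        (∀ i, Finite (e₀.1 i).web) ∧
          ∀ (f : Elts F) (u : f ⟶ e), ∃! v : e₀ ⟶ f, v ≫ u = u₀) ∧
    (IsNormalFunctor F →
      ∀ (e e₀ : Elts F) (u₀ : e₀ ⟶ e),
        (∀ i, Finite (e₀.1 i).web) →
        (∀ (f : Elts F) (u : f ⟶ e), ∃! v : e₀ ⟶ f, v ≫ u = u₀) →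
        ∀ (f : Elts F) (u : f ⟶ e₀), ∃! v : e₀ ⟶ f, v ≫ u = 𝟙 e₀) := by
  constructor
  · constructor
    · exact fun hF e => Stmt3Aux.nfOfNormal F hF e
    · exact fun h => Stmt3Aux.normalOfNF F h
  · intro _ e e₀ u₀ _ huniv f u
    obtain ⟨v, hv, hvu⟩ := huniv f (u ≫ u₀)
    obtain ⟨w, hw, hwu⟩ := huniv e₀ u₀
    refine ⟨v, ?_, ?_⟩
    · have h1 : (v ≫ u) ≫ u₀ = u₀ := by
        rw [CategoryTheory.Category.assoc]; exact hv
      have h2 : 𝟙 e₀ ≫ u₀ = u₀ := CategoryTheory.Category.id_comp u₀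
      exact (hwu _ h1).trans (hwu _ h2).symm
    · intro v' hv'
      refine hvu v' ?_
      show v' ≫ u ≫ u₀ = u₀
      rw [← CategoryTheory.Category.assoc, hv', CategoryTheory.Category.id_comp]
end

section
/- Let F : CohI^n → CohI be a normal functor and X⃗ = (X₁,…,Xₙ) an n-tuple of coherence spaces. Then |F(X⃗)| = { F(ι₁,…,ιₙ)(y) | ⟨Y⃗⟩y ∈ NF(F), and ι_i : Y_i ↪ X_i are embeddings for i ∈ {1,…,n} }. -/
open CategoryTheory Limits

section Stmt4Aux

open CategoryTheory Limits

/-- Restriction of a coherence space to a subset of its web. -/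
def restrCoh (X : CohSpace) (s : Set X.web) : CohSpace where
  web := ↥s
  coh a b := X.coh a.1 b.1
  refl a := X.refl a.1
  symm h := X.symm h

/-- Inclusion embedding of a restriction. -/
def inclCoh (X : CohSpace) (s : Set X.web) : restrCoh X s ⟶ X :=
  ⟨Subtype.val, Subtype.val_injective, fun _ _ => Iff.rfl⟩

/-- Inclusion embedding between restrictions. -/
def inclCoh₂ (X : CohSpace) {s t : Set X.web} (h : s ⊆ t) : restrCoh X s ⟶ restrCoh X t :=
  ⟨Set.inclusion h, Set.inclusion_injective h, fun _ _ => Iff.rfl⟩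

/-- The legs of a colimit cocone in `CohI` are jointly surjective on webs. -/
theorem coh_jointly_surjective {J : Type*} [Category J] {K : J ⥤ CohSpace} {c : Cocone K}
    (hc : IsColimit c) (x : c.pt.web) :
    ∃ (j : J) (y : (K.obj j).web), (c.ι.app j).toFun y = x := by
  classical
  set U : Set c.pt.web := ⋃ j, Set.range (c.ι.app j).toFun with hU
  have hmem : ∀ (j : J) (y : (K.obj j).web), (c.ι.app j).toFun y ∈ U := by
    intro j y
    exact Set.mem_iUnion.2 ⟨j, ⟨y, rfl⟩⟩
  let c' : Cocone K :=
    { pt := restrCoh c.pt U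
      ι :=
        { app := fun j =>
            ⟨fun y => ⟨(c.ι.app j).toFun y, hmem j y⟩,
              fun a b h => (c.ι.app j).inj (congrArg Subtype.val h),
              fun a b => (c.ι.app j).coh_iff a b⟩
          naturality := fun i j f => by
            apply CohEmb.ext
            funext y
            apply Subtype.ext
            exact congrFun (congrArg CohEmb.toFun (c.w f)) y } }
  have h1 : hc.desc c' ≫ inclCoh c.pt U = 𝟙 c.pt := by
    apply hc.hom_ext
    intro j
    rw [← Category.assoc, hc.fac c' j]
    exact CohEmb.ext rfl
  have h2 : ((hc.desc c').toFun x).1 = x := congrFun (congrArg CohEmb.toFun h1) x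
  have h3 : x ∈ U := h2 ▸ ((hc.desc c').toFun x).2
  obtain ⟨j, hj⟩ := Set.mem_iUnion.1 h3
  obtain ⟨y, hy⟩ := hj
  exact ⟨j, y, hy⟩

variable {n : ℕ}

/-- The directed poset of finite subsets of the disjoint union of the webs of `X`. -/
abbrev FinSub (X : CohTuple n) : Type := Finset ((i : Fin n) × (X i).web)

/-- The subset of the web of `X i` carried by `S : FinSub X`. -/
def memSet (X : CohTuple n) (S : FinSub X) (i : Fin n) : Set (X i).web :=
  {a | (⟨i, a⟩ : (i : Fin n) × (X i).web) ∈ S}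

theorem memSet_mono (X : CohTuple n) {S T : FinSub X} (h : S ≤ T) (i : Fin n) :
    memSet X S i ⊆ memSet X T i := fun _ ha => h ha

instance memSet_finite (X : CohTuple n) (S : FinSub X) (i : Fin n) :
    Finite (memSet X S i) := by
  have : memSet X S i = Sigma.mk i ⁻¹' (↑S : Set ((i : Fin n) × (X i).web)) := rfl
  rw [this]
  exact (S.finite_toSet.preimage sigma_mk_injective.injOn).to_subtype

/-- The diagram of restrictions of `X` to finite subsets. -/
def subDiag (X : CohTuple n) : FinSub X ⥤ CohTuple n where
  obj S := fun i => restrCoh (X i) (memSet X S i)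
  map {S T} f := fun i => inclCoh₂ (X i) (memSet_mono X (leOfHom f) i)
  map_id S := rfl
  map_comp f g := rfl

/-- The cocone over `subDiag X` with apex `X`. -/
def subCocone (X : CohTuple n) : Cocone (subDiag X) where
  pt := X
  ι :=
    { app := fun S i => inclCoh (X i) (memSet X S i)
      naturality := fun S T f => rfl }

/-- Values of the legs of a cocone over `subDiag X` are monotone-compatible. -/
theorem leg_mono {X : CohTuple n} (s : Cocone (subDiag X)) {S T : FinSub X} (h : S ≤ T)
    (i : Fin n) (a : (X i).web) (ha : a ∈ memSet X S i) (ha' : a ∈ memSet X T i) :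
    (s.ι.app S i).toFun ⟨a, ha⟩ = (s.ι.app T i).toFun ⟨a, ha'⟩ := by
  have hw := s.w (homOfLE h)
  exact congrFun (congrArg (fun (g : (subDiag X).obj S ⟶ s.pt) => (g i).toFun) hw.symm)
    ⟨a, ha⟩

attribute [local instance] Classical.propDecidable

theorem mem_singleFin (X : CohTuple n) (i : Fin n) (a : (X i).web) :
    a ∈ memSet X ({⟨i, a⟩} : FinSub X) i :=
  Finset.mem_singleton_self _

theorem leg_indep {X : CohTuple n} (s : Cocone (subDiag X)) {S T : FinSub X}
    (i : Fin n) (a : (X i).web) (haS : a ∈ memSet X S i) (haT : a ∈ memSet X T i) :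
    (s.ι.app S i).toFun ⟨a, haS⟩ = (s.ι.app T i).toFun ⟨a, haT⟩ := by
  have h1 : a ∈ memSet X (S ⊔ T) i := Finset.mem_union_left _ haS
  rw [leg_mono s (le_sup_left : S ≤ S ⊔ T) i a haS h1,
    leg_mono s (le_sup_right : T ≤ S ⊔ T) i a haT h1]

/-- The underlying function of the descent morphism. -/
def descFun (X : CohTuple n) (s : Cocone (subDiag X)) (i : Fin n) (a : (X i).web) :
    (s.pt i).web :=
  (s.ι.app ({⟨i, a⟩} : FinSub X) i).toFun ⟨a, mem_singleFin X i a⟩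

theorem descFun_eq (X : CohTuple n) (s : Cocone (subDiag X)) (i : Fin n) (a : (X i).web)
    {T : FinSub X} (ha : a ∈ memSet X T i) :
    descFun X s i a = (s.ι.app T i).toFun ⟨a, ha⟩ :=
  leg_indep s i a (mem_singleFin X i a) ha

set_option maxHeartbeats 1000000 in
/-- The descent morphism out of `X`. -/
def descTuple (X : CohTuple n) (s : Cocone (subDiag X)) : X ⟶ s.pt := fun i =>
  { toFun := descFun X s i
    inj := by
      intro a b hab
      have ha : a ∈ memSet X (({⟨i, a⟩} : FinSub X) ⊔ {⟨i, b⟩}) i :=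
        by simp [memSet, Finset.sup_eq_union]
      have hb : b ∈ memSet X (({⟨i, a⟩} : FinSub X) ⊔ {⟨i, b⟩}) i :=
        by simp [memSet, Finset.sup_eq_union]
      rw [descFun_eq X s i a ha, descFun_eq X s i b hb] at hab
      exact congrArg Subtype.val ((s.ι.app (({⟨i, a⟩} : FinSub X) ⊔ {⟨i, b⟩}) i).inj hab)
    coh_iff := by
      intro a b
      have ha : a ∈ memSet X (({⟨i, a⟩} : FinSub X) ⊔ {⟨i, b⟩}) i :=
        by simp [memSet, Finset.sup_eq_union]
      have hb : b ∈ memSet X (({⟨i, a⟩} : FinSub X) ⊔ {⟨i, b⟩}) i :=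
        by simp [memSet, Finset.sup_eq_union]
      rw [descFun_eq X s i a ha, descFun_eq X s i b hb]
      exact (s.ι.app (({⟨i, a⟩} : FinSub X) ⊔ {⟨i, b⟩}) i).coh_iff ⟨a, ha⟩ ⟨b, hb⟩ }

/-- `subCocone X` is a colimit cocone. -/
def subIsColimit (X : CohTuple n) : IsColimit (subCocone X) where
  desc := descTuple X
  fac s S := by
    funext i
    apply CohEmb.ext
    funext a
    exact descFun_eq X s i a.1 a.2
  uniq s m hm := by
    funext i
    apply CohEmb.ext
    funext a
    exact congrFun (congrArg (fun (g : (subDiag X).obj ({⟨i, a⟩} : FinSub X) ⟶ s.pt) =>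
      (g i).toFun) (hm ({⟨i, a⟩} : FinSub X))) ⟨a, mem_singleFin X i a⟩

/-- The inverse of a bijective embedding. -/
noncomputable def CohEmb.ofBij {X Y : CohSpace} (g : X ⟶ Y) (h : Function.Bijective g.toFun) : Y ⟶ X where
  toFun := (Equiv.ofBijective g.toFun h).symm
  inj := (Equiv.ofBijective g.toFun h).symm.injective
  coh_iff y y' := by
    have e1 : g.toFun ((Equiv.ofBijective g.toFun h).symm y) = y :=
      Equiv.ofBijective_apply_symm_apply g.toFun h y
    have e2 : g.toFun ((Equiv.ofBijective g.toFun h).symm y') = y' :=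
      Equiv.ofBijective_apply_symm_apply g.toFun h y'
    have := g.coh_iff ((Equiv.ofBijective g.toFun h).symm y)
      ((Equiv.ofBijective g.toFun h).symm y')
    rw [e1, e2] at this
    exact this.symm

end Stmt4Aux

-- STATEMENT 4
theorem stmt4 {n : ℕ} (F : CohTuple n ⥤ CohSpace) (hF : IsNormalFunctor F)
    (X : CohTuple n) :
    { x : (F.obj X).web | ∃ (e : Elts F) (ι : e.1 ⟶ X),
        IsNormalForm e ∧ (F.map ι).toFun e.2 = x } = Set.univ := by
  apply Set.eq_univ_of_forall
  intro x
  classical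
  haveI := hF.1
  have hc : IsColimit (F.mapCocone (subCocone X)) :=
    isColimitOfPreserves F (subIsColimit X)
  obtain ⟨S, y, hy⟩ := coh_jointly_surjective hc x
  have hP : ∃ m : ℕ, ∃ e : Elts F, (∀ i, Finite (e.1 i).web) ∧
      (∃ ι : e.1 ⟶ X, (F.map ι).toFun e.2 = x) ∧ (∑ i, Nat.card (e.1 i).web) = m := by
    refine ⟨_, ⟨(subDiag X).obj S, y⟩, fun i => ?_, ⟨(subCocone X).ι.app S, hy⟩, rfl⟩
    exact memSet_finite X S i
  obtain ⟨e, hfin, ⟨ι, hι⟩, hcard⟩ := Nat.find_spec hP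
  refine ⟨e, ι, ⟨hfin, ?_⟩, hι⟩
  intro f u
  have hffin : ∀ i, Finite (f.1 i).web := fun i =>
    haveI := hfin i
    Finite.of_injective _ (u.1 i).inj
  have hle : ∀ i, Nat.card (f.1 i).web ≤ Nat.card (e.1 i).web := fun i =>
    haveI := hfin i
    Nat.card_le_card_of_injective _ (u.1 i).inj
  have hfx : (F.map (u.1 ≫ ι)).toFun f.2 = x := by
    rw [F.map_comp]
    show (F.map ι).toFun ((F.map u.1).toFun f.2) = x
    rw [show (F.map u.1).toFun f.2 = e.2 from u.2, hι]
  have hge : Nat.find hP ≤ ∑ i, Nat.card (f.1 i).web :=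
    Nat.find_min' hP ⟨f, hffin, ⟨u.1 ≫ ι, hfx⟩, rfl⟩
  have hsum : (∑ i, Nat.card (f.1 i).web) = ∑ i, Nat.card (e.1 i).web :=
    le_antisymm (Finset.sum_le_sum fun i _ => hle i) (hcard.le.trans hge)
  have hcards := (Finset.sum_eq_sum_iff_of_le (fun i _ => hle i)).1 hsum
  have hbij : ∀ i, Function.Bijective (u.1 i).toFun := fun i =>
    haveI := hfin i
    (Nat.bijective_iff_injective_and_card _).2 ⟨(u.1 i).inj, hcards i (Finset.mem_univ i)⟩
  let v : e.1 ⟶ f.1 := fun i => CohEmb.ofBij (u.1 i) (hbij i)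
  have hvu : v ≫ u.1 = 𝟙 e.1 := by
    funext i
    apply CohEmb.ext
    funext a
    exact Equiv.ofBijective_apply_symm_apply _ (hbij i) a
  have huv : u.1 ≫ v = 𝟙 f.1 := by
    funext i
    apply CohEmb.ext
    funext a
    exact Equiv.ofBijective_symm_apply_apply _ (hbij i) a
  have hv2 : (F ⋙ webF).map v e.2 = f.2 := by
    rw [← u.2, ← FunctorToTypes.map_comp_apply, huv, FunctorToTypes.map_id_apply]
  refine ⟨⟨v, hv2⟩, Subtype.ext hvu, ?_⟩
  intro v' hv'
  apply Subtype.ext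
  have h1 : v'.1 ≫ u.1 = 𝟙 e.1 := congrArg Subtype.val hv'
  funext i
  apply CohEmb.ext
  funext a
  apply (u.1 i).inj
  have h2 : (u.1 i).toFun ((v'.1 i).toFun a) = a :=
    congrFun (congrArg (fun (g : e.1 ⟶ e.1) => (g i).toFun) h1) a
  rw [h2]
  exact (Equiv.ofBijective_apply_symm_apply _ (hbij i) a).symm
end
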